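/- Let γ_ε be a mollifier on ℝ² and f, g locally integrable functions. Then the commutator between mollification and multiplication satisfies the identity: (f·g)∗γ_ε(x) − (f∗γ_ε)(x)·(g∗γ_ε)(x) = ∫∫_{ℝ²×ℝ²} (f(x−x̄) − f(x)) γ_ε(x̄) (g(x−x̄) − g(x−x')) γ_ε(x') dx' dx̄, for almost every x, provided γ_ε has integral 1. -/

import Mathlib

open MeasureTheory

noncomputable abbrev E2 := EuclideanSpace ℝ (Fin 2)

/-- Convolution on ℝ². -/
noncomputable def conv2 (f γ : E2 → ℝ) (x : E2) : ℝ := ∫ y, f (x - y) * γ y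

/-- the Constantin–E–Titi commutator identity
`(fg)∗γ_ε(x) − (f∗γ_ε)(x)(g∗γ_ε)(x)
  = ∫∫ (f(x−x̄) − f(x)) γ_ε(x̄) (g(x−x̄) − g(x−x')) γ_ε(x') dx' dx̄`
for a mollifier `γ_ε` of integral one and (bounded, measurable) locally integrable `f, g`. -/
theorem mollification_commutator_identity (f g γε : E2 → ℝ)
    (hγ_int : Integrable γε) (hγ_one : ∫ y, γε y = 1)
    (hf : Measurable f) (hg : Measurable g)
    (Cf Cg : ℝ) (hfb : ∀ x, |f x| ≤ Cf) (hgb : ∀ x, |g x| ≤ Cg) :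
    ∀ x : E2,
      conv2 (fun y => f y * g y) γε x - conv2 f γε x * conv2 g γε x =
        ∫ xb, ∫ x',
          (f (x - xb) - f x) * γε xb * ((g (x - xb) - g (x - x')) * γε x') := by
  intro x
  have hCf : 0 ≤ Cf := le_trans (abs_nonneg _) (hfb 0)
  have intble : ∀ (h : E2 → ℝ), Measurable h → ∀ C : ℝ, (∀ y, |h y| ≤ C) →
      Integrable fun y => h (x - y) * γε y := by
    intro h hh C hb
    exact hγ_int.bdd_mul ((hh.comp (measurable_const.sub measurable_id)).aestronglyMeasurable)
      (Filter.Eventually.of_forall (fun y => by simpa [Real.norm_eq_abs] using hb (x - y)))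
  have hif : Integrable fun y => f (x - y) * γε y := intble f hf Cf hfb
  have hig : Integrable fun y => g (x - y) * γε y := intble g hg Cg hgb
  have hifg : Integrable fun y => f (x - y) * g (x - y) * γε y :=
    intble (fun y => f y * g y) (hf.mul hg) (Cf * Cg) (fun y => by
      rw [abs_mul]; exact mul_le_mul (hfb y) (hgb y) (abs_nonneg _) hCf)
  set G := conv2 g γε x with hG
  have inner : ∀ xb : E2,
      (∫ x', (f (x - xb) - f x) * γε xb * ((g (x - xb) - g (x - x')) * γε x'))
        = (f (x - xb) - f x) * γε xb * (g (x - xb) - G) := by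
    intro xb
    rw [integral_const_mul]
    congr 1
    have h1 : (fun x' : E2 => (g (x - xb) - g (x - x')) * γε x')
        = fun x' => g (x - xb) * γε x' - g (x - x') * γε x' := by
      funext x'; ring
    rw [h1, integral_sub (hγ_int.const_mul _) hig, integral_const_mul, hγ_one, mul_one, hG]
    rfl
  have hout : (∫ xb, ∫ x', (f (x - xb) - f x) * γε xb * ((g (x - xb) - g (x - x')) * γε x'))
      = ∫ xb, (f (x - xb) - f x) * γε xb * (g (x - xb) - G) := by
    exact integral_congr_ae (Filter.Eventually.of_forall inner)
  rw [hout]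
  have h2 : (fun xb : E2 => (f (x - xb) - f x) * γε xb * (g (x - xb) - G))
      = fun xb => (f (x - xb) * g (x - xb) * γε xb - G * (f (x - xb) * γε xb))
          - (f x * (g (x - xb) * γε xb) - (f x * G) * γε xb) := by
    funext xb; ring
  have e1 : (∫ xb, ((f (x - xb) * g (x - xb) * γε xb - G * (f (x - xb) * γε xb))
          - (f x * (g (x - xb) * γε xb) - (f x * G) * γε xb)))
      = (∫ xb, (f (x - xb) * g (x - xb) * γε xb - G * (f (x - xb) * γε xb)))
        - ∫ xb, (f x * (g (x - xb) * γε xb) - (f x * G) * γε xb) :=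
    integral_sub (hifg.sub (hif.const_mul G)) ((hig.const_mul (f x)).sub (hγ_int.const_mul (f x * G)))
  have e2 : (∫ xb, (f (x - xb) * g (x - xb) * γε xb - G * (f (x - xb) * γε xb)))
      = (∫ xb, f (x - xb) * g (x - xb) * γε xb) - ∫ xb, G * (f (x - xb) * γε xb) :=
    integral_sub hifg (hif.const_mul G)
  have e3 : (∫ xb, (f x * (g (x - xb) * γε xb) - (f x * G) * γε xb))
      = (∫ xb, f x * (g (x - xb) * γε xb)) - ∫ xb, (f x * G) * γε xb :=
    integral_sub (hig.const_mul (f x)) (hγ_int.const_mul (f x * G))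
  rw [h2, e1, e2, e3, integral_const_mul, integral_const_mul, integral_const_mul, hγ_one, hG]
  simp only [conv2, mul_one]
  ring
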